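/- (Upper bound for S²⁻) Let {(p_i, q_i)}_{i∈I} be a finite family with p_i ∈ ℝ³ and q_i ∈ ℝ, let ε ≥ 0, let r^c be a unit vector in ℝ³ and σ ≥ 0. For each i set θ_i = ∠(r^c, p_i), s_i⁻ = −ε + ‖p_i‖·cos(min{θ_i + √2σ, π}) + q_i and s_i⁺ = ε + ‖p_i‖·cos(max{θ_i − √2σ, 0}) + q_i. Then for every unit vector r with ∠(r, r^c) ≤ √2σ and every t ∈ ℝ, the number of indices i with |⟪−r, p_i⟫ + t − q_i| ≤ ε is at most the number of indices i with s_i⁻ ≤ t ≤ s_i⁺. In particular, the maximum of the objective over the set of vectors −r with ∠(r, r^c) ≤ √2σ is at most max_{t∈ℝ} card{i ∈ I : t ∈ [s_i⁻, s_i⁺]}. -/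
import Mathlib

open InnerProductGeometry
open scoped RealInnerProductSpace

lemma key_inner_bounds {E : Type*} [NormedAddCommGroup E] [InnerProductSpace ℝ E]
    (r rc P : E) (hr : ‖r‖ = 1) (hrc : ‖rc‖ = 1) :
    ‖P‖ * Real.cos (angle rc P + angle r rc) ≤ ⟪r, P⟫ ∧
    ⟪r, P⟫ ≤ ‖P‖ * Real.cos (angle rc P - angle r rc) := by
  set θ := angle rc P with hθ
  set β := angle r rc with hβ
  have hcβ : Real.cos β = ⟪r, rc⟫ := by
    rw [hβ, cos_angle]; rw [hr, hrc]; ring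
  have hcθ : Real.cos θ * ‖P‖ = ⟪rc, P⟫ := by
    have := cos_angle_mul_norm_mul_norm rc P
    rw [hrc] at this; linarith [this]
  have hsβ : 0 ≤ Real.sin β :=
    Real.sin_nonneg_of_nonneg_of_le_pi (angle_nonneg _ _) (angle_le_pi _ _)
  have hsθ : 0 ≤ Real.sin θ :=
    Real.sin_nonneg_of_nonneg_of_le_pi (angle_nonneg _ _) (angle_le_pi _ _)
  set u := r - ⟪r, rc⟫ • rc with hu
  set w := P - ⟪rc, P⟫ • rc with hw
  have hrr : ⟪r, r⟫ = 1 := by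
    rw [real_inner_self_eq_norm_sq, hr]; norm_num
  have hcc : ⟪rc, rc⟫ = 1 := by
    rw [real_inner_self_eq_norm_sq, hrc]; norm_num
  have hPP : ⟪P, P⟫ = ‖P‖ ^ 2 := real_inner_self_eq_norm_sq P
  have huw : ⟪u, w⟫ = ⟪r, P⟫ - ⟪r, rc⟫ * ⟪rc, P⟫ := by
    simp only [hu, hw, inner_sub_left, inner_sub_right, inner_smul_left, inner_smul_right,
      RCLike.ofReal_real_eq_id, id, starRingEnd_apply, star_trivial]
    rw [hcc, real_inner_comm rc r, real_inner_comm P rc]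
    ring
  have hnu : ‖u‖ = Real.sin β := by
    have h2 : ‖u‖ ^ 2 = Real.sin β ^ 2 := by
      rw [← real_inner_self_eq_norm_sq]
      simp only [hu, inner_sub_left, inner_sub_right, inner_smul_left, inner_smul_right,
        RCLike.ofReal_real_eq_id, id, starRingEnd_apply, star_trivial]
      rw [hcc, hrr, real_inner_comm r rc]
      have := Real.sin_sq_add_cos_sq β
      rw [hcβ] at this
      nlinarith [this]
    exact (sq_eq_sq₀ (norm_nonneg u) hsβ).mp h2
  have hnw : ‖w‖ = ‖P‖ * Real.sin θ := by
    have h2 : ‖w‖ ^ 2 = (‖P‖ * Real.sin θ) ^ 2 := by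
      rw [← real_inner_self_eq_norm_sq]
      simp only [hw, inner_sub_left, inner_sub_right, inner_smul_left, inner_smul_right,
        RCLike.ofReal_real_eq_id, id, starRingEnd_apply, star_trivial]
      rw [hcc, hPP, real_inner_comm rc P]
      have h3 := Real.sin_sq_add_cos_sq θ
      linear_combination (-(‖P‖ ^ 2)) * h3 + (Real.cos θ * ‖P‖ + ⟪rc, P⟫) * hcθ
    exact (sq_eq_sq₀ (norm_nonneg w) (by positivity)).mp h2
  have hCS : |⟪u, w⟫| ≤ Real.sin β * (‖P‖ * Real.sin θ) := by
    calc |⟪u, w⟫| ≤ ‖u‖ * ‖w‖ := abs_real_inner_le_norm u w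
    _ = Real.sin β * (‖P‖ * Real.sin θ) := by rw [hnu, hnw]
  have habs := abs_le.mp hCS
  rw [huw] at habs
  rw [← hcβ, ← hcθ] at habs
  constructor
  · rw [Real.cos_add]
    nlinarith [habs.1]
  · rw [Real.cos_sub]
    nlinarith [habs.2]

open Classical in
theorem upper_bound_lower_hemisphere {I : Type*} [Fintype I]
    (p : I → EuclideanSpace ℝ (Fin 3)) (q : I → ℝ) (ε : ℝ) (hε : 0 ≤ ε)
    (rc : EuclideanSpace ℝ (Fin 3)) (hrc : ‖rc‖ = 1) (σ : ℝ) (hσ : 0 ≤ σ) :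
    ∀ r : EuclideanSpace ℝ (Fin 3), ‖r‖ = 1 → angle r rc ≤ Real.sqrt 2 * σ →
      ∀ t : ℝ,
        (Finset.univ.filter fun i => |⟪-r, p i⟫ + t - q i| ≤ ε).card ≤
          (Finset.univ.filter fun i =>
            -ε + ‖p i‖ * Real.cos (min (angle rc (p i) + Real.sqrt 2 * σ) Real.pi) + q i ≤ t ∧
            t ≤ ε + ‖p i‖ * Real.cos (max (angle rc (p i) - Real.sqrt 2 * σ) 0) + q i).card ∧
        (Finset.univ.filter fun i => |⟪-r, p i⟫ + t - q i| ≤ ε).card ≤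
          ⨆ s : ℝ, (Finset.univ.filter fun i =>
            -ε + ‖p i‖ * Real.cos (min (angle rc (p i) + Real.sqrt 2 * σ) Real.pi) + q i ≤ s ∧
            s ≤ ε + ‖p i‖ * Real.cos (max (angle rc (p i) - Real.sqrt 2 * σ) 0) + q i).card := by
  intro r hr hang t
  set δ := Real.sqrt 2 * σ with hδdef
  have hδ : 0 ≤ δ := mul_nonneg (Real.sqrt_nonneg 2) hσ
  have main : ∀ s : ℝ,
      (Finset.univ.filter fun i => |⟪-r, p i⟫ + s - q i| ≤ ε).card ≤
        (Finset.univ.filter fun i =>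
          -ε + ‖p i‖ * Real.cos (min (angle rc (p i) + δ) Real.pi) + q i ≤ s ∧
          s ≤ ε + ‖p i‖ * Real.cos (max (angle rc (p i) - δ) 0) + q i).card := by
    intro s
    apply Finset.card_le_card
    intro i hi
    simp only [Finset.mem_filter, Finset.mem_univ, true_and] at hi ⊢
    rw [inner_neg_left, abs_le] at hi
    set θ := angle rc (p i) with hθ
    set β := angle r rc with hβ
    have hθ0 : 0 ≤ θ := angle_nonneg _ _
    have hθπ : θ ≤ Real.pi := angle_le_pi _ _
    have hβ0 : 0 ≤ β := angle_nonneg _ _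
    have hkey := key_inner_bounds r rc (p i) hr hrc
    rw [← hθ, ← hβ] at hkey
    have hc1 : Real.cos (min (θ + δ) Real.pi) ≤ Real.cos (θ + β) := by
      rcases le_or_gt (θ + δ) Real.pi with h | h
      · rw [min_eq_left h]
        exact Real.cos_le_cos_of_nonneg_of_le_pi (by linarith) h (by linarith)
      · rw [min_eq_right h.le, Real.cos_pi]
        exact Real.neg_one_le_cos _
    have hc2 : Real.cos (θ - β) ≤ Real.cos (max (θ - δ) 0) := by
      rcases le_or_gt 0 (θ - β) with h | h
      · exact Real.cos_le_cos_of_nonneg_of_le_pi (le_max_right _ _)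
          (by linarith) (max_le (by linarith) h)
      · have : max (θ - δ) 0 = 0 := max_eq_right (by linarith)
        rw [this, Real.cos_zero]
        exact Real.cos_le_one _
    have hm1 : ‖p i‖ * Real.cos (min (θ + δ) Real.pi) ≤ ⟪r, p i⟫ :=
      le_trans (mul_le_mul_of_nonneg_left hc1 (norm_nonneg _)) hkey.1
    have hm2 : ⟪r, p i⟫ ≤ ‖p i‖ * Real.cos (max (θ - δ) 0) :=
      le_trans hkey.2 (mul_le_mul_of_nonneg_left hc2 (norm_nonneg _))
    constructor <;> [linarith [hi.1]; linarith [hi.2]]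
  refine ⟨main t, le_trans (main t) ?_⟩
  exact le_ciSup (f := fun s : ℝ => (Finset.univ.filter fun i =>
      -ε + ‖p i‖ * Real.cos (min (angle rc (p i) + Real.sqrt 2 * σ) Real.pi) + q i ≤ s ∧
      s ≤ ε + ‖p i‖ * Real.cos (max (angle rc (p i) - Real.sqrt 2 * σ) 0) + q i).card)
    ⟨Fintype.card I, by
      rintro n ⟨s, rfl⟩
      exact le_trans (Finset.card_filter_le _ _) (le_of_eq Finset.card_univ)⟩ t
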